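/- Let M and N be bilinear vector spaces over a field k, and equip M ⊗_k N with the form ⟨m⊗n, m'⊗n'⟩ = ⟨m,m'⟩_M · ⟨n,n'⟩_N. Then the left radical of the tensor product satisfies (M ⊗_k N)^⊥ = M^⊥ ⊗_k N + M ⊗_k N^⊥. In particular, if M and N are nondegenerate then so is M ⊗_k N. -/

import Mathlib

open TensorProduct

section Aux

variable {k V P : Type*} [Field k] [AddCommGroup V] [AddCommGroup P]
  [Module k V] [Module k P]

private lemma aux_dualTensorHom_injective :
    Function.Injective (dualTensorHom k V P) := by
  classical
  rw [injective_iff_map_eq_zero]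
  intro t ht
  let b : Module.Basis (Module.Basis.ofVectorSpaceIndex k P) k P := Module.Basis.ofVectorSpace k P
  let e : Module.Dual k V ⊗[k] P ≃ₗ[k] (Module.Basis.ofVectorSpaceIndex k P →₀ Module.Dual k V) :=
    (TensorProduct.congr (LinearEquiv.refl k _) b.repr).trans
      (TensorProduct.finsuppScalarRight k k (Module.Dual k V) _)
  have key : ∀ (s : Module.Dual k V ⊗[k] P) (m : V),
      Finsupp.linearCombination k b ((e s).mapRange (fun f => f m) rfl)
        = dualTensorHom k V P s m := by
    intro s m
    induction s using TensorProduct.induction_on with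
    | zero => simp
    | tmul f p =>
        have h1 : ((e (f ⊗ₜ p)).mapRange (fun f => f m) rfl) = f m • b.repr p := by
          ext i
          simp only [e, LinearEquiv.trans_apply, TensorProduct.congr_tmul,
            LinearEquiv.refl_apply, Finsupp.mapRange_apply,
            TensorProduct.finsuppScalarRight_apply_tmul_apply, Finsupp.smul_apply,
            LinearMap.smul_apply, smul_eq_mul]
          ring
        rw [h1, map_smul, b.linearCombination_repr, dualTensorHom_apply]
    | add x y hx hy =>
        have h2 : ((e (x + y)).mapRange (fun f => f m) rfl)
            = ((e x).mapRange (fun f => f m) rfl) + ((e y).mapRange (fun f => f m) rfl) := by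
          rw [map_add]
          exact Finsupp.mapRange_add (fun a c => rfl) _ _
        rw [h2, map_add, hx, hy, map_add, LinearMap.add_apply]
  have hzero : ∀ m : V, ((e t).mapRange (fun f => f m) rfl) = 0 := by
    intro m
    apply linearIndependent_iff.mp b.linearIndependent
    rw [key, ht, LinearMap.zero_apply]
  have het : e t = 0 := by
    ext i m
    have := congrArg (fun l => l i) (hzero m)
    simpa [Finsupp.mapRange_apply] using this
  have := congrArg e.symm het
  simpa using this

private lemma aux_dualDistrib_injective {k M N : Type*} [Field k] [AddCommGroup M]
    [AddCommGroup N] [Module k M] [Module k N] :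
    Function.Injective (TensorProduct.dualDistrib k M N) := by
  have rel : ∀ (t : Module.Dual k M ⊗[k] Module.Dual k N) (m : M) (n : N),
      TensorProduct.dualDistrib k M N t (m ⊗ₜ n)
        = dualTensorHom k M (Module.Dual k N) t m n := by
    intro t m n
    induction t using TensorProduct.induction_on with
    | zero => simp
    | tmul f g => simp [dualTensorHom_apply, smul_eq_mul]
    | add x y hx hy => simp [hx, hy]
  rw [injective_iff_map_eq_zero]
  intro t ht
  apply aux_dualTensorHom_injective (k := k) (V := M) (P := Module.Dual k N)
  rw [map_zero]
  ext m n
  rw [← rel, ht]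
  rfl

end Aux

private lemma aux_map_subtype_injective {k A C : Type*} [Field k] [AddCommGroup A]
    [AddCommGroup C] [Module k A] [Module k C] (p : Submodule k A) (q : Submodule k C) :
    Function.Injective (TensorProduct.map p.subtype q.subtype) := by
  obtain ⟨g₁, hg₁⟩ := p.subtype.exists_leftInverse_of_injective (Submodule.ker_subtype p)
  obtain ⟨g₂, hg₂⟩ := q.subtype.exists_leftInverse_of_injective (Submodule.ker_subtype q)
  have h : (TensorProduct.map g₁ g₂).comp (TensorProduct.map p.subtype q.subtype)
      = LinearMap.id := by
    rw [← TensorProduct.map_comp, hg₁, hg₂, TensorProduct.map_id]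
  have hz : ∀ z, TensorProduct.map g₁ g₂ (TensorProduct.map p.subtype q.subtype z) = z := by
    intro z
    have := LinearMap.congr_fun h z
    simpa using this
  intro x y hxy
  rw [← hz x, ← hz y, hxy]

set_option maxHeartbeats 2000000
set_option synthInstance.maxHeartbeats 1000000

/-- For bilinear vector spaces `M`, `N` over a field `k`, the left radical of
the tensor product form `⟨m⊗n, m'⊗n'⟩ = ⟨m,m'⟩·⟨n,n'⟩` is
`M^⊥ ⊗ N + M ⊗ N^⊥`; in particular the tensor product of nondegenerate forms is
nondegenerate. -/
theorem bilin_radical_of_tmul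
    {k M N : Type*} [Field k] [AddCommGroup M] [AddCommGroup N]
    [Module k M] [Module k N]
    (B₁ : LinearMap.BilinForm k M) (B₂ : LinearMap.BilinForm k N) :
    LinearMap.ker (B₁.tmul B₂) =
      LinearMap.range (TensorProduct.map (LinearMap.ker B₁).subtype LinearMap.id) ⊔
        LinearMap.range (TensorProduct.map LinearMap.id (LinearMap.ker B₂).subtype) ∧
    (LinearMap.ker B₁ = ⊥ → LinearMap.ker B₂ = ⊥ → LinearMap.ker (B₁.tmul B₂) = ⊥) := by
  -- Step 1: the tensor form factors through `dualDistrib`.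
  have hfac : (B₁.tmul B₂ : M ⊗[k] N →ₗ[k] _) =
      (TensorProduct.dualDistrib k M N) ∘ₗ (TensorProduct.map B₁ B₂) := by
    ext m n m' n'
    simp [mul_comm]
  -- Step 2: factor `map B₁ B₂` through the range restrictions.
  have hfac2 : TensorProduct.map B₁ B₂ =
      (TensorProduct.map (LinearMap.range B₁).subtype (LinearMap.range B₂).subtype) ∘ₗ
        (TensorProduct.map B₁.rangeRestrict B₂.rangeRestrict) := by
    rw [← TensorProduct.map_comp]
    congr 1
  have hinj2 : Function.Injective
      (TensorProduct.map (LinearMap.range B₁).subtype (LinearMap.range B₂).subtype) := by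
    exact aux_map_subtype_injective _ _
  -- Step 3: compute the kernel via right-exactness.
  have hexact₁ : Function.Exact (LinearMap.ker B₁).subtype B₁.rangeRestrict := by
    rw [LinearMap.exact_iff]
    simp
  have hexact₂ : Function.Exact (LinearMap.ker B₂).subtype B₂.rangeRestrict := by
    rw [LinearMap.exact_iff]
    simp
  have hk1 : LinearMap.ker (TensorProduct.dualDistrib k M N) = ⊥ := by
    exact LinearMap.ker_eq_bot_of_injective aux_dualDistrib_injective
  have hk2 : LinearMap.ker (TensorProduct.map (LinearMap.range B₁).subtype
      (LinearMap.range B₂).subtype) = ⊥ := by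
    exact LinearMap.ker_eq_bot_of_injective hinj2
  have hker : LinearMap.ker (B₁.tmul B₂) =
      LinearMap.ker (TensorProduct.map B₁.rangeRestrict B₂.rangeRestrict) := by
    rw [hfac, LinearMap.ker_comp, hk1, Submodule.comap_bot, hfac2, LinearMap.ker_comp,
      hk2, Submodule.comap_bot]
  have hmk := @TensorProduct.map_ker k (LinearMap.ker B₁) M (LinearMap.range B₁) _ _ _ _ _ _ _ _ _
    hexact₁ B₁.surjective_rangeRestrict (LinearMap.ker B₂) N (LinearMap.range B₂) _ _ _ _ _ _ _ _
    hexact₂ B₂.surjective_rangeRestrict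
  have main : LinearMap.ker (B₁.tmul B₂) =
      LinearMap.range (TensorProduct.map (LinearMap.ker B₁).subtype LinearMap.id) ⊔
        LinearMap.range (TensorProduct.map LinearMap.id (LinearMap.ker B₂).subtype) := by
    rw [hker, hmk, sup_comm]
    rfl
  refine ⟨main, fun h₁ h₂ => ?_⟩
  rw [main, h₁, h₂]
  have r1 : LinearMap.range (TensorProduct.map (⊥ : Submodule k M).subtype
      (LinearMap.id (M := N))) = ⊥ := by
    rw [LinearMap.range_eq_bot]
    apply TensorProduct.ext'
    rintro ⟨x, hx⟩ y
    rw [Submodule.mem_bot] at hx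
    subst hx
    simp
  have r2 : LinearMap.range (TensorProduct.map (LinearMap.id (M := M))
      (⊥ : Submodule k N).subtype) = ⊥ := by
    rw [LinearMap.range_eq_bot]
    apply TensorProduct.ext'
    rintro x ⟨y, hy⟩
    rw [Submodule.mem_bot] at hy
    subst hy
    simp
  rw [r1, r2, sup_bot_eq]
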